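/- arXiv:2009.02970 — 6 statements merged into one kernel-verified Lean document; each statement's English description precedes it below -/
import Mathlib

section
/- Let x ∈ ℝ^n and let i, j be chosen independently and uniformly at random from {1,...,n}. Define x' by x'_i = x'_j = (x_i + x_j)/2 and x'_k = x_k for k ≠ i, j. Then the expected mean of squares satisfies E[(1/n)∑_k (x'_k)² | x] = (1/n)·x̄² + (1 − 1/n)·(1/n)∑_k x_k², where x̄ = (1/n)∑_k x_k, and the mean is preserved: x̄' = x̄. -/
open Finset

noncomputable def mean {n : ℕ} (x : Fin n → ℝ) : ℝ := (∑ k, x k) / n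
noncomputable def meanSq {n : ℕ} (x : Fin n → ℝ) : ℝ := (∑ k, (x k)^2) / n

/-- Gossip step: agents `i` and `j` both take the pairwise average. -/
noncomputable def gossip {n : ℕ} (x : Fin n → ℝ) (i j : Fin n) : Fin n → ℝ :=
  fun k => if k = i ∨ k = j then (x i + x j) / 2 else x k

lemma sum_gossip {n : ℕ} (x : Fin n → ℝ) (i j : Fin n) :
    ∑ k, gossip x i j k = ∑ k, x k := by
  by_cases hij : i = j
  · subst hij
    have : ∀ k, gossip x i i k = x k := by
      intro k
      simp only [gossip, or_self]
      split <;> simp_all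
    simp [this]
  · have hsupp : ∀ k ∈ (Finset.univ : Finset (Fin n)), k ∉ ({i, j} : Finset (Fin n)) →
      gossip x i j k - x k = 0 := by
      intro k _ hk
      simp only [Finset.mem_insert, Finset.mem_singleton, not_or] at hk
      simp [gossip, hk.1, hk.2]
    have h1 : ∑ k, (gossip x i j k - x k)
        = ∑ k ∈ ({i, j} : Finset (Fin n)), (gossip x i j k - x k) :=
      (Finset.sum_subset (Finset.subset_univ _) hsupp).symm
    rw [Finset.sum_pair hij] at h1
    have hgi : gossip x i j i = (x i + x j) / 2 := by simp [gossip]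
    have hgj : gossip x i j j = (x i + x j) / 2 := by simp [gossip]
    have h2 : ∑ k, (gossip x i j k - x k) = ∑ k, gossip x i j k - ∑ k, x k :=
      Finset.sum_sub_distrib (fun k => gossip x i j k) (fun k => x k)
    rw [h2, hgi, hgj] at h1
    linarith

lemma sum_gossip_sq {n : ℕ} (x : Fin n → ℝ) (i j : Fin n) :
    ∑ k, (gossip x i j k)^2
      = (∑ k, (x k)^2) - (x i)^2 - (x j)^2 + (x i + x j)^2 / 2 := by
  by_cases hij : i = j
  · subst hij
    have : ∀ k, gossip x i i k = x k := by
      intro k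
      simp only [gossip, or_self]
      split <;> simp_all
    simp only [this]
    ring
  · have hsupp : ∀ k ∈ (Finset.univ : Finset (Fin n)), k ∉ ({i, j} : Finset (Fin n)) →
      (gossip x i j k)^2 - (x k)^2 = 0 := by
      intro k _ hk
      simp only [Finset.mem_insert, Finset.mem_singleton, not_or] at hk
      simp [gossip, hk.1, hk.2]
    have h1 : ∑ k, ((gossip x i j k)^2 - (x k)^2)
        = ∑ k ∈ ({i, j} : Finset (Fin n)), ((gossip x i j k)^2 - (x k)^2) :=
      (Finset.sum_subset (Finset.subset_univ _) hsupp).symm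
    rw [Finset.sum_pair hij] at h1
    have hgi : gossip x i j i = (x i + x j) / 2 := by simp [gossip]
    have hgj : gossip x i j j = (x i + x j) / 2 := by simp [gossip]
    have h2 : ∑ k, ((gossip x i j k)^2 - (x k)^2)
        = ∑ k, (gossip x i j k)^2 - ∑ k, (x k)^2 := Finset.sum_sub_distrib (fun k => (gossip x i j k)^2) (fun k => (x k)^2)
    rw [h2, hgi, hgj] at h1
    nlinarith [h1]

theorem gossip_expected_moments {n : ℕ} (hn : 0 < n) (x : Fin n → ℝ) :
    ((∑ i : Fin n, ∑ j : Fin n, meanSq (gossip x i j)) / (n ^ 2 : ℝ)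
      = (1 / n) * (mean x) ^ 2 + (1 - 1 / n) * meanSq x)
    ∧ ∀ i j : Fin n, mean (gossip x i j) = mean x := by
  have hn' : (n : ℝ) ≠ 0 := Nat.cast_ne_zero.mpr hn.ne'
  set S : ℝ := ∑ k, (x k)^2 with hS
  set T : ℝ := ∑ k, x k with hT
  constructor
  · have inner : ∀ i : Fin n,
        ∑ j : Fin n, (S - (x i)^2 - (x j)^2 + (x i + x j)^2 / 2)
          = n * S - n * (x i)^2 / 2 - S / 2 + x i * T := by
      intro i
      have he : ∀ j, S - (x i)^2 - (x j)^2 + (x i + x j)^2 / 2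
          = (S - (x i)^2 / 2) + (x i * x j - (x j)^2 / 2) := by intro j; ring
      simp_rw [he]
      simp only [hS, hT]
      simp only [Finset.sum_add_distrib, Finset.sum_sub_distrib, ← Finset.mul_sum,
        ← Finset.sum_div, Finset.sum_const, Finset.card_univ, Fintype.card_fin, nsmul_eq_mul]
      ring
    have outer : ∑ i : Fin n, (n * S - n * (x i)^2 / 2 - S / 2 + x i * T)
        = (n : ℝ)^2 * S - n * S + T^2 := by
      simp_rw [show ∀ i : Fin n, n * S - n * (x i)^2 / 2 - S / 2 + x i * T
          = (n * S - S / 2) + (x i * T - (n : ℝ) / 2 * (x i)^2) from fun i => by ring]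
      simp only [hS, hT]
      simp only [Finset.sum_add_distrib, Finset.sum_sub_distrib, ← Finset.sum_mul,
        ← Finset.mul_sum, ← Finset.sum_div, Finset.sum_const, Finset.card_univ,
        Fintype.card_fin, nsmul_eq_mul]
      ring
    have hbig : ∑ i : Fin n, ∑ j : Fin n, meanSq (gossip x i j)
        = ((n : ℝ)^2 * S - n * S + T^2) / n := by
      simp_rw [meanSq, sum_gossip_sq, ← hS, ← Finset.sum_div]
      simp_rw [inner]
      rw [outer]
    rw [hbig, mean, meanSq, ← hS, ← hT]
    field_simp
    ring
  · intro i j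
    simp [mean, sum_gossip, ← hT]
end

section
/- Under a random gossip step (two indices drawn independently and uniformly, both set to their average), the expected variance satisfies E[Var(x') | x] = (1 − 1/n)·Var(x), where Var(x) = (1/n)∑_k (x_k − x̄)². -/
open Finset

noncomputable def varOf {n : ℕ} (x : Fin n → ℝ) : ℝ := (∑ k, (x k - mean x) ^ 2) / n

lemma gossip_var_key {n : ℕ} (hn : 0 < n) (x : Fin n → ℝ) (i j : Fin n) :
    varOf (gossip x i j) = varOf x - (x i - x j) ^ 2 / (2 * n) := by
  have hn' : (n : ℝ) ≠ 0 := Nat.cast_ne_zero.mpr hn.ne'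
  by_cases h : i = j
  · subst h
    have hg : gossip x i i = x := by
      funext k
      unfold gossip
      split
      · rename_i hk
        rcases hk with hk | hk <;> subst hk <;> ring
      · rfl
    rw [hg]; ring
  · have hzero : ∀ k ∉ ({i, j} : Finset (Fin n)), gossip x i j k = x k := by
      intro k hk
      simp only [Finset.mem_insert, Finset.mem_singleton, not_or] at hk
      unfold gossip
      rw [if_neg]; tauto
    have hi : gossip x i j i = (x i + x j) / 2 := by unfold gossip; simp
    have hj : gossip x i j j = (x i + x j) / 2 := by unfold gossip; simp
    have hsum : ∑ k, gossip x i j k = ∑ k, x k := by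
      have h0 : ∑ k ∈ ({i, j} : Finset (Fin n)), (gossip x i j k - x k)
          = ∑ k, (gossip x i j k - x k) :=
        Finset.sum_subset (Finset.subset_univ _) (fun k _ hk => by rw [hzero k hk]; ring)
      rw [Finset.sum_pair h, hi, hj, Finset.sum_sub_distrib] at h0
      linarith
    have hmean : mean (gossip x i j) = mean x := by unfold mean; rw [hsum]
    have hsq : ∑ k, (gossip x i j k - mean x) ^ 2
        = ∑ k, (x k - mean x) ^ 2 - (x i - x j) ^ 2 / 2 := by
      have h0 : ∑ k ∈ ({i, j} : Finset (Fin n)),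
            ((gossip x i j k - mean x) ^ 2 - (x k - mean x) ^ 2)
          = ∑ k, ((gossip x i j k - mean x) ^ 2 - (x k - mean x) ^ 2) :=
        Finset.sum_subset (Finset.subset_univ _) (fun k _ hk => by rw [hzero k hk]; ring)
      rw [Finset.sum_pair h, hi, hj, Finset.sum_sub_distrib] at h0
      have hid : (((x i + x j) / 2 - mean x) ^ 2 - (x i - mean x) ^ 2)
          + (((x i + x j) / 2 - mean x) ^ 2 - (x j - mean x) ^ 2)
          = -((x i - x j) ^ 2 / 2) := by ring
      linarith
    unfold varOf
    rw [hmean, hsq]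
    field_simp

theorem gossip_expected_variance {n : ℕ} (hn : 0 < n) (x : Fin n → ℝ) :
    (∑ i : Fin n, ∑ j : Fin n, varOf (gossip x i j)) / (n ^ 2 : ℝ)
      = (1 - 1 / n) * varOf x := by
  have hn' : (n : ℝ) ≠ 0 := Nat.cast_ne_zero.mpr hn.ne'
  have ha : ∑ k, (x k - mean x) = 0 := by
    rw [Finset.sum_sub_distrib, Finset.sum_const, card_univ, Fintype.card_fin,
      nsmul_eq_mul]
    unfold mean
    field_simp
    ring
  have inner : ∀ i : Fin n, ∑ j, (x i - x j) ^ 2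
      = n * (x i - mean x) ^ 2 + ∑ k, (x k - mean x) ^ 2 := by
    intro i
    have h1 : ∀ j, (x i - x j) ^ 2
        = ((x i - mean x) ^ 2 + (x j - mean x) ^ 2)
          - 2 * (x i - mean x) * (x j - mean x) := fun j => by ring
    simp_rw [h1]
    rw [Finset.sum_sub_distrib, Finset.sum_add_distrib, ← Finset.mul_sum, ha,
      Finset.sum_const, card_univ, Fintype.card_fin, nsmul_eq_mul]
    ring
  have expand : ∑ i : Fin n, ∑ j : Fin n, (x i - x j) ^ 2
      = 2 * n * ∑ k, (x k - mean x) ^ 2 := by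
    simp_rw [inner]
    rw [Finset.sum_add_distrib, ← Finset.mul_sum, Finset.sum_const, card_univ,
      Fintype.card_fin, nsmul_eq_mul]
    ring
  have hkey : ∀ i j : Fin n, varOf (gossip x i j)
      = varOf x - (x i - x j) ^ 2 / (2 * n) := gossip_var_key hn x
  simp_rw [hkey]
  have step1 : ∑ i : Fin n, ∑ j : Fin n, (varOf x - (x i - x j) ^ 2 / (2 * n))
      = ∑ i : Fin n, ((n : ℝ) * varOf x - (∑ j : Fin n, (x i - x j) ^ 2) / (2 * n)) := by
    refine Finset.sum_congr rfl fun i _ => ?_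
    rw [Finset.sum_sub_distrib, Finset.sum_const, card_univ, Fintype.card_fin,
      nsmul_eq_mul, ← Finset.sum_div]
  rw [step1, Finset.sum_sub_distrib, Finset.sum_const, card_univ, Fintype.card_fin,
    nsmul_eq_mul, ← Finset.sum_div, expand]
  have hvar : ∑ k, (x k - mean x) ^ 2 = n * varOf x := by
    unfold varOf; field_simp
  rw [hvar]
  field_simp
end

section
/- Under an arrival event in a system of n agents, the expected variance satisfies E[Var(x') | x] = (n/(n+1))·(Var(x) + (σ² + x̄²)/(n+1)), where x' ∈ ℝ^{n+1} is the state after the arriving agent (independent, mean 0, variance σ²) joins. -/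
open Finset MeasureTheory

lemma varOf_eq {m : ℕ} (hm : 0 < m) (y : Fin m → ℝ) :
    varOf y = (∑ k, (y k) ^ 2) / m - (mean y) ^ 2 := by
  have hm' : (m : ℝ) ≠ 0 := Nat.cast_ne_zero.mpr hm.ne'
  have hsum : ∑ k, y k = m * mean y := by
    unfold mean
    field_simp
  have key : ∑ k, (y k - mean y) ^ 2
      = (∑ k, (y k) ^ 2) - (2 * mean y) * (∑ k, y k) + m * (mean y) ^ 2 := by
    calc ∑ k, (y k - mean y) ^ 2
        = ∑ k, ((y k) ^ 2 - (2 * mean y) * (y k) + (mean y) ^ 2) := by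
          apply Finset.sum_congr rfl; intros; ring
      _ = (∑ k, (y k) ^ 2) - (2 * mean y) * (∑ k, y k) + m * (mean y) ^ 2 := by
          rw [Finset.sum_add_distrib, Finset.sum_sub_distrib, ← Finset.mul_sum,
            Finset.sum_const, card_univ, Fintype.card_fin, nsmul_eq_mul]
  unfold varOf
  rw [key, hsum]
  field_simp
  ring

theorem arrival_expected_variance {n : ℕ} (hn : 0 < n) (x : Fin n → ℝ)
    {Ω : Type*} [MeasureSpace Ω] [IsProbabilityMeasure (volume : Measure Ω)]
    (v : Ω → ℝ) (σ : ℝ)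
    (hv1 : ∫ ω, v ω = 0) (hv2 : ∫ ω, (v ω) ^ 2 = σ ^ 2)
    (hint : Integrable v) (hint2 : Integrable (fun ω => (v ω) ^ 2)) :
    (∫ ω, varOf (Fin.snoc x (v ω)))
      = ((n : ℝ) / ((n : ℝ) + 1)) * (varOf x + (σ ^ 2 + (mean x) ^ 2) / ((n : ℝ) + 1)) := by
  have hn' : (n : ℝ) ≠ 0 := Nat.cast_ne_zero.mpr hn.ne'
  have hn1 : (n : ℝ) + 1 ≠ 0 := by positivity
  set S : ℝ := ∑ k, x k with hS
  set Q : ℝ := ∑ k, (x k) ^ 2 with hQ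
  have hpt : ∀ t : ℝ, varOf (Fin.snoc x t)
      = (Q / ((n:ℝ)+1) - S ^ 2 / ((n:ℝ)+1) ^ 2)
        + ((1/((n:ℝ)+1) - 1/((n:ℝ)+1)^2) * t ^ 2 + (-2 * S / ((n:ℝ)+1)^2) * t) := by
    intro t
    rw [varOf_eq (Nat.succ_pos n)]
    unfold mean
    simp only [Fin.sum_univ_castSucc, Fin.snoc_castSucc, Fin.snoc_last, ← hS, ← hQ]
    push_cast
    field_simp
    ring
  have hrw : (fun ω => varOf (Fin.snoc x (v ω)))
      = fun ω => (Q / ((n:ℝ)+1) - S ^ 2 / ((n:ℝ)+1) ^ 2)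
        + ((1/((n:ℝ)+1) - 1/((n:ℝ)+1)^2) * (v ω) ^ 2 + (-2 * S / ((n:ℝ)+1)^2) * (v ω)) := by
    funext ω; exact hpt (v ω)
  rw [hrw]
  have hI : Integrable (fun ω => (1/((n:ℝ)+1) - 1/((n:ℝ)+1)^2) * (v ω) ^ 2
      + (-2 * S / ((n:ℝ)+1)^2) * (v ω)) := (hint2.const_mul _).add (hint.const_mul _)
  rw [integral_add (integrable_const _) hI,
    integral_add (hint2.const_mul _) (hint.const_mul _),
    integral_const_mul, integral_const_mul, hv1, hv2, integral_const]
  simp only [measure_univ, probReal_univ, ENNReal.toReal_one, smul_eq_mul, one_mul, mul_zero, add_zero]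
  have hvx : varOf x = Q / n - (mean x) ^ 2 := varOf_eq hn x
  have hmx : mean x = S / n := rfl
  rw [hvx, hmx]
  field_simp
  ring
end

section
/- Let A be an N×N doubly stochastic matrix, let ξ(0) ∈ ℝ^N have i.i.d. entries with mean 0 and variance σ², and let ξ = A·ξ(0). Then for any subset S ⊆ {1,...,N}, E[(∑_{i∈S} ξ_i)²] ≤ |S|·σ². -/
open Finset MeasureTheory

/-- `A` doubly stochastic, `ξ(0)` i.i.d. with mean 0 and variance `σ²`, `ξ = A·ξ(0)`:
then `E[(∑_{i∈S} ξ_i)²] ≤ |S|·σ²` for any subset `S` of coordinates. -/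
theorem doubly_stochastic_subset_sum_bound {N : ℕ} (A : Matrix (Fin N) (Fin N) ℝ)
    (hpos : ∀ i j, 0 ≤ A i j) (hrow : ∀ i, ∑ j, A i j = 1) (hcol : ∀ j, ∑ i, A i j = 1)
    {Ω : Type*} [MeasureSpace Ω] [IsProbabilityMeasure (volume : Measure Ω)]
    (ξ0 : Fin N → Ω → ℝ) (σ : ℝ)
    (hmeas : ∀ i, Measurable (ξ0 i))
    (hindep : ProbabilityTheory.iIndepFun ξ0 volume)
    (hident : ∀ i j, MeasureTheory.Measure.map (ξ0 i) volume = Measure.map (ξ0 j) volume)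
    (hmean : ∀ i, ∫ ω, ξ0 i ω = 0) (hvar : ∀ i, ∫ ω, (ξ0 i ω) ^ 2 = σ ^ 2)
    (hint : ∀ i, Integrable (ξ0 i)) (hint2 : ∀ i, Integrable (fun ω => (ξ0 i ω) ^ 2))
    (S : Finset (Fin N)) :
    ∫ ω, (∑ i ∈ S, A.mulVec (fun k => ξ0 k ω) i) ^ 2 ≤ (S.card : ℝ) * σ ^ 2 := by
  classical
  set c : Fin N → ℝ := fun j => ∑ i ∈ S, A i j with hc
  have hrw : ∀ ω, (∑ i ∈ S, A.mulVec (fun k => ξ0 k ω) i) = ∑ j, c j * ξ0 j ω := by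
    intro ω
    simp only [Matrix.mulVec, dotProduct]
    rw [Finset.sum_comm]
    simp [hc, Finset.sum_mul]
  have hmul_int : ∀ j k : Fin N, Integrable (fun ω => ξ0 j ω * ξ0 k ω) := by
    intro j k
    by_cases h : j = k
    · subst h; simpa [sq] using hint2 j
    · exact (hindep.indepFun h).integrable_mul (hint j) (hint k)
  have hcross : ∀ j k : Fin N, j ≠ k → ∫ ω, ξ0 j ω * ξ0 k ω = 0 := by
    intro j k h
    have h2 := (hindep.indepFun h).integral_mul_eq_mul_integral (hint j).aestronglyMeasurable
      (hint k).aestronglyMeasurable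
    rw [hmean j, zero_mul] at h2
    exact h2
  have hsq : ∀ ω : Ω, (∑ j, c j * ξ0 j ω) ^ 2
      = ∑ j, ∑ k, (c j * c k) * (ξ0 j ω * ξ0 k ω) := by
    intro ω
    rw [sq, Finset.sum_mul_sum]
    exact Finset.sum_congr rfl fun j _ => Finset.sum_congr rfl fun k _ => by ring
  have hintegral : ∫ ω, (∑ i ∈ S, A.mulVec (fun k => ξ0 k ω) i) ^ 2
      = ∑ j, (c j) ^ 2 * σ ^ 2 := by
    simp_rw [hrw, hsq]
    rw [integral_finset_sum _ (fun j _ => integrable_finset_sum _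
      (fun k _ => (hmul_int j k).const_mul _))]
    refine Finset.sum_congr rfl fun j _ => ?_
    rw [integral_finset_sum _ (fun k _ => (hmul_int j k).const_mul _)]
    rw [Finset.sum_eq_single j]
    · rw [integral_const_mul]
      have : ∫ ω, ξ0 j ω * ξ0 j ω = σ ^ 2 := by
        simpa [sq] using hvar j
      rw [this]; ring
    · intro k _ hk
      rw [integral_const_mul, hcross j k (Ne.symm hk), mul_zero]
    · intro h; exact absurd (Finset.mem_univ j) h
  rw [hintegral]
  have hc01 : ∀ j, 0 ≤ c j ∧ c j ≤ 1 := by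
    intro j
    constructor
    · exact Finset.sum_nonneg fun i _ => hpos i j
    · calc c j ≤ ∑ i, A i j :=
            Finset.sum_le_sum_of_subset_of_nonneg (Finset.subset_univ S)
              (fun i _ _ => hpos i j)
        _ = 1 := hcol j
  have hcsum : ∑ j, c j = (S.card : ℝ) := by
    rw [hc]
    rw [Finset.sum_comm]
    simp [hrow]
  rcases Nat.eq_zero_or_pos N with hN | hN
  · subst hN
    simp [Finset.eq_empty_of_isEmpty S]
  · have hσ : 0 ≤ σ ^ 2 := by
      rw [← hvar ⟨0, hN⟩]
      exact integral_nonneg fun ω => sq_nonneg _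
    calc ∑ j, (c j) ^ 2 * σ ^ 2 ≤ ∑ j, c j * σ ^ 2 := by
          refine Finset.sum_le_sum fun j _ => ?_
          have h1 : c j ^ 2 ≤ c j := by nlinarith [(hc01 j).1, (hc01 j).2]
          exact mul_le_mul_of_nonneg_right h1 hσ
      _ = (S.card : ℝ) * σ ^ 2 := by rw [← Finset.sum_mul, hcsum]
end

section
/- Let x ∈ ℝ^n with n ≥ 2 and let x̃ ∈ ℝ^{n−1} be obtained from x by removing an arbitrary (adversarially chosen) entry. Then Var(x̃) ≤ (n/(n−1))·Var(x). -/
open Finset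

/-- The vector `x` with its `j`-th entry removed. -/
def removeAt {n : ℕ} (j : Fin (n + 1)) (x : Fin (n + 1) → ℝ) : Fin n → ℝ :=
  fun k => x (j.succAbove k)

lemma mean_min {m : ℕ} (hm : (m : ℝ) ≠ 0) (y : Fin m → ℝ) (c : ℝ) :
    ∑ k, (y k - mean y) ^ 2 ≤ ∑ k, (y k - c) ^ 2 := by
  set μ := mean y with hμdef
  have hsum : ∑ k, y k = m * μ := by
    rw [hμdef, mean]; field_simp
  have hdiff : ∑ k, (y k - c) ^ 2 - ∑ k, (y k - μ) ^ 2 = (m : ℝ) * (μ - c) ^ 2 := by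
    rw [← Finset.sum_sub_distrib]
    have : ∀ k ∈ Finset.univ, (y k - c) ^ 2 - (y k - μ) ^ 2
        = (μ - c) * (2 * y k - c - μ) := fun k _ => by ring
    rw [Finset.sum_congr rfl this]
    calc ∑ k, (μ - c) * (2 * y k - c - μ)
        = ∑ k, ((2 * (μ - c)) * y k - (μ - c) * (c + μ)) :=
          Finset.sum_congr rfl fun k _ => by ring
      _ = 2 * (μ - c) * (∑ k, y k) - m * ((μ - c) * (c + μ)) := by
          rw [Finset.sum_sub_distrib, ← Finset.mul_sum, Finset.sum_const]
          simp [mul_comm]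
      _ = (m : ℝ) * (μ - c) ^ 2 := by rw [hsum]; ring
  nlinarith [sq_nonneg (μ - c), Nat.cast_nonneg (α := ℝ) m]

/-- Adversarial departure: removing an arbitrary entry of `x ∈ ℝ^{n+1}` (with `n ≥ 1`)
increases the variance by at most a factor `(n+1)/n`. -/
theorem adversarial_departure_variance {n : ℕ} (hn : 1 ≤ n) (x : Fin (n + 1) → ℝ)
    (j : Fin (n + 1)) :
    varOf (removeAt j x) ≤ (((n : ℝ) + 1) / n) * varOf x := by
  have hn' : (0 : ℝ) < n := by exact_mod_cast hn
  set μ := mean x with hμ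
  set y := removeAt j x with hy
  have h1 : ∑ k, (y k - mean y) ^ 2 ≤ ∑ k, (y k - μ) ^ 2 :=
    mean_min (ne_of_gt hn') y μ
  have h2 : ∑ k, (y k - μ) ^ 2 ≤ ∑ i, (x i - μ) ^ 2 := by
    rw [Fin.sum_univ_succAbove (fun i => (x i - μ) ^ 2) j]
    have : ∑ k, (y k - μ) ^ 2 = ∑ k, (x (j.succAbove k) - μ) ^ 2 := rfl
    rw [this]
    nlinarith [sq_nonneg (x j - μ)]
  have h3 : ∑ k, (y k - mean y) ^ 2 ≤ ∑ i, (x i - μ) ^ 2 := le_trans h1 h2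
  rw [varOf, varOf]
  have hr : (((n : ℝ) + 1) / n) * ((∑ i, (x i - μ) ^ 2) / (↑(n + 1)))
      = (∑ i, (x i - μ) ^ 2) / n := by
    push_cast
    field_simp
  rw [hr]
  gcongr
end

section
/- Let (V*_j)_{j∈ℕ} be nonnegative reals with V*_0 = 0 satisfying (n_0 + j + γ)·V*_j ≤ (j−1)·V*_{j−1} + (1 − 1/j²)·n_0·V*_{j+1} + σ² for all j ≥ 1, let π_j = (n_0^j/j!)e^{−n_0}, and suppose (z_j)_{j∈ℕ} is a nonnegative sequence with z_0 = 0 satisfying (n_0 + j + γ)·z_j ≥ j·z_{j+1} + (1 − 1/(j−1)²)·n_0·z_{j−1} + π_j for all j ≥ 1 (the term with z_{j−1} interpreted as 0 for j = 1), with ∑ z_j < ∞. Assume also V*_j is uniformly bounded. Then ∑_{j≥0} π_j·V*_j ≤ (∑_{j≥0} z_j)·σ². -/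
/-- Weak-duality bound for the steady-state conditional variances of the open system:
any nonnegative feasible dual sequence `z` yields `∑ π_j V_j ≤ (∑ z_j)·σ²`. -/
theorem steady_state_variance_duality_bound (n0 γ σ : ℝ)
    (hn0 : 0 < n0) (hγ : 0 ≤ γ) (hσ : 0 ≤ σ)
    (V z : ℕ → ℝ)
    (hVnn : ∀ j, 0 ≤ V j) (hV0 : V 0 = 0)
    (hVineq : ∀ j : ℕ, 1 ≤ j →
      (n0 + j + γ) * V j
        ≤ ((j : ℝ) - 1) * V (j - 1) + (1 - 1 / (j : ℝ) ^ 2) * n0 * V (j + 1) + σ ^ 2)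
    (hznn : ∀ j, 0 ≤ z j) (hz0 : z 0 = 0)
    (hz1 : (n0 + 1 + γ) * z 1 ≥ 1 * z 2 + (n0 ^ 1 / (Nat.factorial 1)) * Real.exp (-n0))
    (hzineq : ∀ j : ℕ, 2 ≤ j →
      (n0 + j + γ) * z j
        ≥ j * z (j + 1) + (1 - 1 / ((j : ℝ) - 1) ^ 2) * n0 * z (j - 1)
          + (n0 ^ j / (Nat.factorial j)) * Real.exp (-n0))
    (hzsum : Summable z) (hVbd : ∃ C, ∀ j, V j ≤ C) :
    ∑' j : ℕ, (n0 ^ j / (Nat.factorial j)) * Real.exp (-n0) * V j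
      ≤ (∑' j : ℕ, z j) * σ ^ 2 := by
  obtain ⟨C0, hC0⟩ := hVbd
  set C := max C0 0 with hC
  have hCnn : 0 ≤ C := le_max_right _ _
  have hVC : ∀ j, V j ≤ C := fun j => (hC0 j).trans (le_max_left _ _)
  set π : ℕ → ℝ := fun j => n0 ^ j / (Nat.factorial j) * Real.exp (-n0) with hπ
  have hπnn : ∀ j, 0 ≤ π j := by
    intro j
    have : 0 ≤ n0 ^ j / (Nat.factorial j) := by positivity
    exact mul_nonneg this (Real.exp_pos _).le
  have hπsum : Summable π := (Real.summable_pow_div_factorial n0).mul_right _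
  have hsum : Summable (fun j => π j * V j) :=
    Summable.of_nonneg_of_le (fun j => mul_nonneg (hπnn j) (hVnn j))
      (fun j => mul_le_mul_of_nonneg_left (hVC j) (hπnn j)) (hπsum.mul_right C)
  have key : ∀ N, 1 ≤ N → ∑ j ∈ Finset.range (N+1), π j * V j
      ≤ σ^2 * ∑ j ∈ Finset.range (N+1), z j - (N:ℝ) * z (N+1) * V N
        + n0 * (1 - 1/(N:ℝ)^2) * z N * V (N+1) := by
    intro N hN
    induction N, hN using Nat.le_induction with
    | base =>
      have h1 : π 1 ≤ (n0 + 1 + γ) * z 1 - z 2 := by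
        have := hz1
        simp only [hπ, pow_one, Nat.factorial_one, Nat.cast_one] at this ⊢
        linarith
      have h2 : (n0 + 1 + γ) * V 1 ≤ σ ^ 2 := by
        have := hVineq 1 le_rfl
        norm_num at this
        linarith [this]
      simp only [Finset.sum_range_succ, Finset.sum_range_zero]
      rw [hV0, hz0]
      push_cast
      norm_num
      nlinarith [mul_le_mul_of_nonneg_right h1 (hVnn 1),
        mul_le_mul_of_nonneg_left h2 (hznn 1), hznn 2, hVnn 1]
    | succ N hN ih =>
      have hz' := hzineq (N+1) (by omega)
      have hV' := hVineq (N+1) (by omega)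
      have hc1 : ((N+1:ℕ) : ℝ) = (N:ℝ) + 1 := by push_cast; ring
      have hs1 : (N+1) - 1 = N := by omega
      rw [hs1, hc1] at hz' hV'
      have hp : (n0 ^ (N+1) / (Nat.factorial (N+1))) * Real.exp (-n0) = π (N+1) := rfl
      rw [hp] at hz'
      have h1 : π (N+1) ≤ (n0 + ((N:ℝ)+1) + γ) * z (N+1) - ((N:ℝ)+1) * z (N+2)
          - (1 - 1/((N:ℝ)+1-1)^2) * n0 * z N := by linarith
      have h1' : π (N+1) * V (N+1) ≤ ((n0 + ((N:ℝ)+1) + γ) * z (N+1) - ((N:ℝ)+1) * z (N+2)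
          - (1 - 1/((N:ℝ)+1-1)^2) * n0 * z N) * V (N+1) :=
        mul_le_mul_of_nonneg_right h1 (hVnn (N+1))
      have h2' : z (N+1) * ((n0 + ((N:ℝ)+1) + γ) * V (N+1))
          ≤ z (N+1) * (((N:ℝ)+1-1) * V N + (1 - 1/((N:ℝ)+1)^2) * n0 * V (N+2) + σ^2) :=
        mul_le_mul_of_nonneg_left hV' (hznn (N+1))
      rw [Finset.sum_range_succ (fun j => π j * V j) (N+1),
        Finset.sum_range_succ (fun j => z j) (N+1)]
      push_cast [hc1]
      have hNN : ((N:ℝ)+1-1) = (N:ℝ) := by ring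
      rw [hNN] at h1' h2'
      show ∑ j ∈ Finset.range (N+1), π j * V j + π (N+1) * V (N+1)
        ≤ σ^2 * (∑ j ∈ Finset.range (N+1), z j + z (N+1))
          - ((N:ℝ)+1) * z (N+2) * V (N+1) + n0 * (1 - 1/((N:ℝ)+1)^2) * z (N+1) * V (N+2)
      nlinarith [ih, h1', h2']
  -- limit step
  have hTz : 0 ≤ ∑' j, z j := tsum_nonneg hznn
  have hfin : ∀ N, 1 ≤ N → ∑ j ∈ Finset.range (N+1), π j * V j
      ≤ σ^2 * (∑' j, z j) + n0 * C * z N := by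
    intro N hN
    have hk := key N hN
    have h1 : σ^2 * ∑ j ∈ Finset.range (N+1), z j ≤ σ^2 * (∑' j, z j) :=
      mul_le_mul_of_nonneg_left (Summable.sum_le_tsum _ (fun i _ => hznn i) hzsum) (sq_nonneg σ)
    have h2 : 0 ≤ (N:ℝ) * z (N+1) * V N := mul_nonneg (mul_nonneg (Nat.cast_nonneg N) (hznn _)) (hVnn _)
    have hNr : (1:ℝ) ≤ (N:ℝ) := by exact_mod_cast hN
    have h3 : 1/(N:ℝ)^2 ≤ 1 := by
      rw [div_le_one (by positivity)]
      nlinarith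
    have h4 : 0 ≤ 1 - 1/(N:ℝ)^2 := by
      have : 1/(N:ℝ)^2 ≤ 1 := h3
      have h0 : 0 ≤ 1/(N:ℝ)^2 := by positivity
      linarith
    have h5 : n0 * (1 - 1/(N:ℝ)^2) * z N * V (N+1) ≤ n0 * C * z N := by
      have h0 : (0:ℝ) ≤ 1/(N:ℝ)^2 := by positivity
      have hb : (1 - 1/(N:ℝ)^2) * V (N+1) ≤ C := by
        calc (1 - 1/(N:ℝ)^2) * V (N+1) ≤ 1 * V (N+1) :=
              mul_le_mul_of_nonneg_right (by linarith) (hVnn _)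
          _ = V (N+1) := one_mul _
          _ ≤ C := hVC _
      calc n0 * (1 - 1/(N:ℝ)^2) * z N * V (N+1)
          = n0 * z N * ((1 - 1/(N:ℝ)^2) * V (N+1)) := by ring
        _ ≤ n0 * z N * C := by
            exact mul_le_mul_of_nonneg_left hb (mul_nonneg hn0.le (hznn N))
        _ = n0 * C * z N := by ring
    linarith
  have htend1 : Filter.Tendsto (fun N => ∑ j ∈ Finset.range (N+1), π j * V j)
      Filter.atTop (nhds (∑' j, π j * V j)) :=
    hsum.hasSum.tendsto_sum_nat.comp (Filter.tendsto_add_atTop_nat 1)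
  have htend2 : Filter.Tendsto (fun N => σ^2 * (∑' j, z j) + n0 * C * z N)
      Filter.atTop (nhds (σ^2 * (∑' j, z j) + n0 * C * 0)) := by
    exact Filter.Tendsto.const_add _ ((hzsum.tendsto_atTop_zero).const_mul _)
  have hle : ∑' j, π j * V j ≤ σ^2 * (∑' j, z j) + n0 * C * 0 := by
    refine le_of_tendsto_of_tendsto htend1 htend2 ?_
    filter_upwards [Filter.eventually_ge_atTop 1] with N hN
    exact hfin N hN
  calc ∑' j : ℕ, (n0 ^ j / (Nat.factorial j)) * Real.exp (-n0) * V j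
      = ∑' j, π j * V j := rfl
    _ ≤ σ^2 * (∑' j, z j) + n0 * C * 0 := hle
    _ = (∑' j, z j) * σ^2 := by ring
end
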